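/- arXiv:2406.12771 — 3 statements merged into one kernel-verified Lean document; each statement's English description precedes it below -/
import Mathlib

section
/- Let g : ℝ^n → ℝ be μ-strongly convex and C_f-smooth perturbation f be C_f-smooth. Fix x, let y* minimize g over the affine set {y : By = b}, and for δ ∈ [0, μ/(2C_f)] let y*_δ minimize g + δ·f over the same set. Then ‖y*_δ − y*‖ ≤ (2δ/μ)·‖∇f(y*)‖. -/
open InnerProductSpace

theorem stmt_0 {n m : ℕ}
    (g f : EuclideanSpace ℝ (Fin n) → ℝ)
    (f' : EuclideanSpace ℝ (Fin n) → EuclideanSpace ℝ (Fin n))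
    (μ Cf δ : ℝ) (hμ : 0 < μ) (hCf : 0 < Cf)
    (hg2 : ContDiff ℝ 2 g)
    (hg : StrongConvexOn Set.univ μ g)
    (hf' : ∀ y, HasGradientAt f (f' y) y)
    (hfsmooth : LipschitzWith (Real.toNNReal Cf) f')
    (B : EuclideanSpace ℝ (Fin n) →ₗ[ℝ] EuclideanSpace ℝ (Fin m))
    (b : EuclideanSpace ℝ (Fin m))
    (K : Set (EuclideanSpace ℝ (Fin n)))
    (hK : K = {y | B y = b}) (hKne : K.Nonempty)
    (ystar yδ : EuclideanSpace ℝ (Fin n))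
    (hystar : ystar ∈ K) (hystarmin : IsMinOn g K ystar)
    (hyδ : yδ ∈ K) (hyδmin : IsMinOn (fun y => g y + δ * f y) K yδ)
    (hδ : δ ∈ Set.Icc (0:ℝ) (μ / (2 * Cf))) :
    ‖yδ - ystar‖ ≤ (2 * δ / μ) * ‖f' ystar‖ := by
  obtain ⟨hδ0, hδμ⟩ := hδ
  set d := yδ - ystar with hd
  rcases eq_or_ne d 0 with h0 | h0
  · rw [h0, norm_zero]
    positivity
  -- B d = 0, so lines in direction d stay in K
  have hBys : B ystar = b := by rw [hK] at hystar; exact hystar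
  have hByδ : B yδ = b := by rw [hK] at hyδ; exact hyδ
  have hBd : B d = 0 := by rw [hd, map_sub, hBys, hByδ, sub_self]
  have hmem : ∀ x ∈ K, ∀ t : ℝ, x + t • d ∈ K := by
    intro x hx t
    rw [hK] at hx ⊢
    simp only [Set.mem_setOf_eq, map_add, map_smul, hBd, smul_zero, add_zero]
    exact hx
  have gdiff : Differentiable ℝ g := hg2.differentiable (by norm_num)
  -- derivative of lines
  have hL : ∀ (x : EuclideanSpace ℝ (Fin n)) (t : ℝ),
      HasDerivAt (fun s : ℝ => x + s • d) d t := by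
    intro x t
    simpa using ((hasDerivAt_id t).smul_const d).const_add x
  have hgL : ∀ (x : EuclideanSpace ℝ (Fin n)) (t : ℝ),
      HasDerivAt (fun s : ℝ => g (x + s • d)) (fderiv ℝ g (x + t • d) d) t := by
    intro x t
    exact (gdiff (x + t • d)).hasFDerivAt.comp_hasDerivAt t (hL x t)
  -- optimality at ystar
  have key1 : fderiv ℝ g ystar d = 0 := by
    have hmin : IsLocalMin (fun t : ℝ => g (ystar + t • d)) 0 := by
      refine Filter.Eventually.of_forall fun t => ?_
      simp only [zero_smul, add_zero]
      exact hystarmin (hmem ystar hystar t)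
    have := hmin.hasDerivAt_eq_zero (f' := fderiv ℝ g (ystar + (0:ℝ) • d) d) (hgL ystar 0)
    simpa using this
  -- optimality at yδ
  have hfL : HasDerivAt (fun s : ℝ => f (yδ + s • d)) (⟪f' yδ, d⟫_ℝ) 0 := by
    have h1 : HasFDerivAt f (toDual ℝ _ (f' yδ)) yδ := hf' yδ
    have h1' : HasFDerivAt f (toDual ℝ _ (f' yδ)) (yδ + (0:ℝ) • d) := by
      simp only [zero_smul, add_zero]; exact h1
    have h2 := h1'.comp_hasDerivAt (0:ℝ) (hL yδ 0)
    exact h2.congr_deriv (by simp)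
  have key2 : fderiv ℝ g yδ d + δ * ⟪f' yδ, d⟫_ℝ = 0 := by
    have hmin : IsLocalMin (fun t : ℝ => g (yδ + t • d) + δ * f (yδ + t • d)) 0 := by
      refine Filter.Eventually.of_forall fun t => ?_
      simp only [zero_smul, add_zero]
      exact hyδmin (hmem yδ hyδ t)
    have hder : HasDerivAt (fun t : ℝ => g (yδ + t • d) + δ * f (yδ + t • d))
        (fderiv ℝ g (yδ + (0:ℝ) • d) d + δ * ⟪f' yδ, d⟫_ℝ) 0 :=
      (hgL yδ 0).add (hfL.const_mul δ)
    have := hmin.hasDerivAt_eq_zero hder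
    simpa using this
  -- strong convexity along the line: gradient monotonicity
  set c : ℝ := μ * ‖d‖ ^ 2 with hc
  have hSC : StrongConvexOn Set.univ c (fun t : ℝ => g (ystar + t • d)) := by
    constructor
    · exact convex_univ
    · intro x _ y _ a bb ha hb hab
      have h1 := hg.2 (Set.mem_univ (ystar + x • d)) (Set.mem_univ (ystar + y • d)) ha hb hab
      have heq : a • (ystar + x • d) + bb • (ystar + y • d) = ystar + (a * x + bb * y) • d := by
        have hb1 : bb = 1 - a := by linarith
        subst hb1
        module
      rw [heq] at h1
      have hnorm : ‖(ystar + x • d) - (ystar + y • d)‖ = ‖x - y‖ * ‖d‖ := by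
        have : (ystar + x • d) - (ystar + y • d) = (x - y) • d := by
          rw [sub_smul]; abel
        rw [this, norm_smul]
      rw [hnorm] at h1
      have : μ / 2 * (‖x - y‖ * ‖d‖) ^ 2 = c / 2 * ‖x - y‖ ^ 2 := by
        rw [hc]; ring
      calc (fun t : ℝ => g (ystar + t • d)) (a • x + bb • y)
          = g (ystar + (a * x + bb * y) • d) := by simp [smul_eq_mul]
        _ ≤ a • g (ystar + x • d) + bb • g (ystar + y • d) - a * bb * (μ / 2 * (‖x - y‖ * ‖d‖) ^ 2)
            := h1
        _ = a • (fun t : ℝ => g (ystar + t • d)) x + bb • (fun t : ℝ => g (ystar + t • d)) y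
            - a * bb * (c / 2 * ‖x - y‖ ^ 2) := by rw [this]
  have hconv : ConvexOn ℝ Set.univ (fun t : ℝ => g (ystar + t • d) - c / 2 * t ^ 2) := by
    have := strongConvexOn_iff_convex.mp hSC
    simpa [Real.norm_eq_abs, sq_abs] using this
  have hψ : ∀ t : ℝ, HasDerivAt (fun s : ℝ => g (ystar + s • d) - c / 2 * s ^ 2)
      (fderiv ℝ g (ystar + t • d) d - c * t) t := by
    intro t
    have hq : HasDerivAt (fun s : ℝ => c / 2 * s ^ 2) (c * t) t := by
      have := ((hasDerivAt_pow 2 t).const_mul (c / 2))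
      exact this.congr_deriv (by push_cast; ring)
    exact (hgL ystar t).sub hq
  have key3 : fderiv ℝ g ystar d + c ≤ fderiv ℝ g yδ d := by
    have h01 : (0:ℝ) < 1 := one_pos
    have hle1 := hconv.le_slope_of_hasDerivAt (Set.mem_univ 0) (Set.mem_univ 1) h01
      (by simpa using hψ 0)
    have hle2 := hconv.slope_le_of_hasDerivAt (Set.mem_univ 0) (Set.mem_univ 1) h01 (hψ 1)
    have hy1 : ystar + (1:ℝ) • d = yδ := by
      rw [one_smul, hd, add_sub_cancel]
    rw [hy1] at hle2
    have := hle1.trans hle2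
    linarith
  -- combine
  have keyg : c ≤ δ * ‖f' yδ‖ * ‖d‖ := by
    have hCS := abs_real_inner_le_norm (f' yδ) d
    have h1 : fderiv ℝ g yδ d = -(δ * ⟪f' yδ, d⟫_ℝ) := by linarith
    have h2 : -⟪f' yδ, d⟫_ℝ ≤ ‖f' yδ‖ * ‖d‖ := by
      cases abs_cases (⟪f' yδ, d⟫_ℝ) with
      | inl h => linarith [real_inner_le_norm (f' yδ) d, norm_nonneg (f' yδ), norm_nonneg d,
          mul_nonneg (norm_nonneg (f' yδ)) (norm_nonneg d)]
      | inr h => linarith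
    have h3 : c ≤ δ * (-⟪f' yδ, d⟫_ℝ) := by linarith
    calc c ≤ δ * (-⟪f' yδ, d⟫_ℝ) := h3
      _ ≤ δ * (‖f' yδ‖ * ‖d‖) := by
          exact mul_le_mul_of_nonneg_left h2 hδ0
      _ = δ * ‖f' yδ‖ * ‖d‖ := by ring
  have hlip : ‖f' yδ - f' ystar‖ ≤ Cf * ‖d‖ := by
    have := hfsmooth.dist_le_mul yδ ystar
    rw [dist_eq_norm, dist_eq_norm, Real.coe_toNNReal Cf hCf.le] at this
    exact this
  have hnf : ‖f' yδ‖ ≤ ‖f' ystar‖ + Cf * ‖d‖ := by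
    have := norm_sub_norm_le (f' yδ) (f' ystar)
    linarith
  have hdpos : 0 < ‖d‖ := norm_pos_iff.mpr h0
  have hδC : δ * (2 * Cf) ≤ μ := (le_div_iff₀ (by positivity)).mp hδμ
  rw [div_mul_eq_mul_div, le_div_iff₀ hμ]
  -- μ * ‖d‖^2 ≤ δ * ‖f' yδ‖ * ‖d‖ ≤ δ*(‖f' ystar‖ + Cf‖d‖)*‖d‖, δ*Cf ≤ μ/2
  nlinarith [mul_le_mul_of_nonneg_right hnf (mul_nonneg hδ0 hdpos.le),
    mul_le_mul_of_nonneg_right hδC (mul_pos hdpos hdpos).le, norm_nonneg (f' ystar)]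
end

section
/- Let g(x, ·) be μ_g-strongly convex in y, f(x, ·) be L_f-Lipschitz and C_f-smooth in y, and h(x,y) be affine in y with dual multipliers λ* ∈ ℝ^{d_h}_{≥0}. Let (y*, λ*) be the KKT pair of min_{h(x,y)≤0} g(x,y), so that ∇_y g(x,y*) + ∇_y h(x,y*)ᵀ λ* = 0. Define L(y) = f(x,y) + α₁(g(x,y) + λ*ᵀ h(x,y) − g*(x)) + (α₂/2)‖h_I(x,y)‖², where h_I are the active constraints (with h_I(x,y*) = 0) and g*(x) = g(x,y*) + λ*ᵀ h(x,y*). If α₁ μ_g ≥ 2 C_f, and y' minimizes L, then ‖y' − y*‖ ≤ 2 L_f / (α₁ μ_g). -/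
theorem stmt_7 {dy dh : ℕ}
    (g f : EuclideanSpace ℝ (Fin dy) → ℝ)
    (f' : EuclideanSpace ℝ (Fin dy) → EuclideanSpace ℝ (Fin dy))
    (h : EuclideanSpace ℝ (Fin dy) → EuclideanSpace ℝ (Fin dh))
    (μg Lf Cf α₁ α₂ : ℝ)
    (hμg : 0 < μg) (hLf : 0 ≤ Lf) (hCf : 0 ≤ Cf) (hα₁ : 0 < α₁) (hα₂ : 0 ≤ α₂)
    (hf' : ∀ y, HasGradientAt f (f' y) y)
    (hgradbound : ∀ y, ‖f' y‖ ≤ Lf)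
    (hfLipVal : LipschitzWith (Real.toNNReal Lf) f)
    (hfsmooth : LipschitzWith (Real.toNNReal Cf) f')
    (haff : ∃ (T : EuclideanSpace ℝ (Fin dy) →ₗ[ℝ] EuclideanSpace ℝ (Fin dh))
      (c : EuclideanSpace ℝ (Fin dh)), ∀ y, h y = T y + c)
    (lamstar : EuclideanSpace ℝ (Fin dh)) (hlam : ∀ i, 0 ≤ lamstar i)
    (hGconv : StrongConvexOn Set.univ μg (fun y => g y + (inner ℝ (lamstar) (h y) : ℝ)))
    (ystar : EuclideanSpace ℝ (Fin dy))
    (hystar : IsMinOn (fun y => g y + (inner ℝ (lamstar) (h y) : ℝ)) Set.univ ystar)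
    (I : Finset (Fin dh))
    (hactive : ∀ i ∈ I, h ystar i = 0) (hlampos : ∀ i ∈ I, 0 < lamstar i)
    (gstar : ℝ) (hgstar : gstar = g ystar + (inner ℝ (lamstar) (h ystar) : ℝ))
    (L : EuclideanSpace ℝ (Fin dy) → ℝ)
    (hL : ∀ y, L y = f y + α₁ * (g y + (inner ℝ (lamstar) (h y) : ℝ) - gstar)
      + α₂ / 2 * ∑ i ∈ I, (h y i) ^ 2)
    (y' : EuclideanSpace ℝ (Fin dy))
    (hy' : IsMinOn L Set.univ y')
    (hpen : α₁ * μg ≥ 2 * Cf) :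
    ‖y' - ystar‖ ≤ 2 * Lf / (α₁ * μg) := by
  set G : EuclideanSpace ℝ (Fin dy) → ℝ :=
    fun y => g y + (inner ℝ (lamstar) (h y) : ℝ) with hG
  set r : ℝ := ‖y' - ystar‖ with hr
  have hr0 : 0 ≤ r := norm_nonneg _
  -- strong convexity + min gives quadratic growth
  have hquad : μg / 2 * r ^ 2 ≤ G y' - G ystar := by
    have key : ∀ t : ℝ, t ∈ Set.Ioo (0 : ℝ) 1 →
        (1 - t) * (μg / 2 * r ^ 2) ≤ G y' - G ystar := by
      intro t ht
      have h1 : G (t • y' + (1 - t) • ystar) ≤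
          t • G y' + (1 - t) • G ystar - t * (1 - t) * (μg / 2 * r ^ 2) := by
        have := hGconv.2 (Set.mem_univ y') (Set.mem_univ ystar)
          ht.1.le (by linarith [ht.2] : (0:ℝ) ≤ 1 - t) (by ring)
        simpa [hr] using this
      have h2 : G ystar ≤ G (t • y' + (1 - t) • ystar) := hystar (Set.mem_univ _)
      have h3 : t * ((1 - t) * (μg / 2 * r ^ 2)) ≤ t * (G y' - G ystar) := by
        simp only [smul_eq_mul] at h1 h2
        ring_nf at h1 h2 ⊢
        nlinarith [h1, h2]
      exact le_of_mul_le_mul_left (by linarith) ht.1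
    have hlim : Filter.Tendsto (fun t : ℝ => (1 - t) * (μg / 2 * r ^ 2))
        (nhdsWithin 0 (Set.Ioo (0:ℝ) 1)) (nhds (μg / 2 * r ^ 2)) := by
      have : Filter.Tendsto (fun t : ℝ => (1 - t) * (μg / 2 * r ^ 2))
          (nhds 0) (nhds ((1 - 0) * (μg / 2 * r ^ 2))) := by
        exact (Filter.Tendsto.const_sub 1 Filter.tendsto_id).mul tendsto_const_nhds
      simpa using this.mono_left nhdsWithin_le_nhds
    have hne : (nhdsWithin (0:ℝ) (Set.Ioo (0:ℝ) 1)).NeBot := by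
      apply mem_closure_iff_nhdsWithin_neBot.1
      rw [closure_Ioo one_ne_zero.symm]
      exact Set.left_mem_Icc.2 zero_le_one
    exact le_of_tendsto hlim (Filter.eventually_of_mem self_mem_nhdsWithin key)
  -- compare L values
  have hpenstar : ∑ i ∈ I, (h ystar i) ^ 2 = 0 :=
    Finset.sum_eq_zero fun i hi => by rw [hactive i hi]; ring
  have hLmin : L y' ≤ L ystar := hy' (Set.mem_univ _)
  have hLy' : L ystar = f ystar := by
    rw [hL, hpenstar, hgstar]; ring
  have hpennn : 0 ≤ α₂ / 2 * ∑ i ∈ I, (h y' i) ^ 2 := by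
    apply mul_nonneg (by linarith)
    exact Finset.sum_nonneg fun i _ => sq_nonneg _
  have hmain : α₁ * (G y' - G ystar) ≤ f ystar - f y' := by
    have := hL y'
    rw [hgstar] at this
    simp only [hG] at *
    nlinarith [hLmin, hLy']
  -- Lipschitz bound on f
  have hlip : f ystar - f y' ≤ Lf * r := by
    have := hfLipVal.dist_le_mul ystar y'
    rw [Real.coe_toNNReal _ hLf] at this
    have h2 : |f ystar - f y'| ≤ Lf * dist ystar y' := by
      simpa [Real.dist_eq] using this
    have h3 : dist ystar y' = r := by
      rw [hr, dist_eq_norm, ← norm_neg]; congr 1; abel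
    rw [h3] at h2
    exact (abs_le.1 h2).2
  have hfinal : α₁ * (μg / 2 * r ^ 2) ≤ Lf * r := by
    calc α₁ * (μg / 2 * r ^ 2) ≤ α₁ * (G y' - G ystar) := by
          apply mul_le_mul_of_nonneg_left hquad hα₁.le
      _ ≤ f ystar - f y' := hmain
      _ ≤ Lf * r := hlip
  rcases eq_or_lt_of_le hr0 with heq | hpos
  · rw [← heq]
    positivity
  · rw [le_div_iff₀ (by positivity)]
    nlinarith
end

section
/- In the setting of the penalty function L(y) = f(x,y) + α₁(g(x,y) + λ*ᵀh(x,y) − g*(x)) + (α₂/2)‖h_I(x,y)‖² with minimizer y', the constraint violation of active constraints satisfies ‖h_I(x, y')‖² ≤ (2/α₂)·L_f·‖y' − y*‖, and consequently ‖h_I(x, y')‖ ≤ 2 L_f / √(α₁ α₂ μ_g). -/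
theorem stmt_8 {dy dh : ℕ}
    (g f : EuclideanSpace ℝ (Fin dy) → ℝ)
    (f' : EuclideanSpace ℝ (Fin dy) → EuclideanSpace ℝ (Fin dy))
    (h : EuclideanSpace ℝ (Fin dy) → EuclideanSpace ℝ (Fin dh))
    (μg Lf Cf α₁ α₂ : ℝ)
    (hμg : 0 < μg) (hLf : 0 ≤ Lf) (hCf : 0 ≤ Cf) (hα₁ : 0 < α₁) (hα₂ : 0 < α₂)
    (hf' : ∀ y, HasGradientAt f (f' y) y)
    (hgradbound : ∀ y, ‖f' y‖ ≤ Lf)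
    (hfLipVal : LipschitzWith (Real.toNNReal Lf) f)
    (hfsmooth : LipschitzWith (Real.toNNReal Cf) f')
    (haff : ∃ (T : EuclideanSpace ℝ (Fin dy) →ₗ[ℝ] EuclideanSpace ℝ (Fin dh))
      (c : EuclideanSpace ℝ (Fin dh)), ∀ y, h y = T y + c)
    (lamstar : EuclideanSpace ℝ (Fin dh)) (hlam : ∀ i, 0 ≤ lamstar i)
    (hGconv : StrongConvexOn Set.univ μg (fun y => g y + (inner ℝ (lamstar) (h y) : ℝ)))
    (ystar : EuclideanSpace ℝ (Fin dy))
    (hystar : IsMinOn (fun y => g y + (inner ℝ (lamstar) (h y) : ℝ)) Set.univ ystar)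
    (I : Finset (Fin dh))
    (hactive : ∀ i ∈ I, h ystar i = 0) (hlampos : ∀ i ∈ I, 0 < lamstar i)
    (gstar : ℝ) (hgstar : gstar = g ystar + (inner ℝ (lamstar) (h ystar) : ℝ))
    (L : EuclideanSpace ℝ (Fin dy) → ℝ)
    (hL : ∀ y, L y = f y + α₁ * (g y + (inner ℝ (lamstar) (h y) : ℝ) - gstar)
      + α₂ / 2 * ∑ i ∈ I, (h y i) ^ 2)
    (y' : EuclideanSpace ℝ (Fin dy))
    (hy' : IsMinOn L Set.univ y')
    (hpen : α₁ * μg ≥ 2 * Cf)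
    (hbound : ‖y' - ystar‖ ≤ 2 * Lf / (α₁ * μg)) :
    (∑ i ∈ I, (h y' i) ^ 2 ≤ 2 / α₂ * Lf * ‖y' - ystar‖) ∧
    Real.sqrt (∑ i ∈ I, (h y' i) ^ 2) ≤ 2 * Lf / Real.sqrt (α₁ * α₂ * μg) := by
  have hmin : L y' ≤ L ystar := isMinOn_iff.mp hy' ystar (Set.mem_univ _)
  have hg0 : (0:ℝ) ≤ g y' + (inner ℝ (lamstar) (h y') : ℝ) - gstar := by
    have := isMinOn_iff.mp hystar y' (Set.mem_univ _)
    linarith [hgstar]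
  have hLys : L ystar = f ystar := by
    rw [hL]
    have hsum : ∑ i ∈ I, (h ystar i) ^ 2 = 0 := by
      apply Finset.sum_eq_zero
      intro i hi
      rw [hactive i hi]; ring
    rw [hsum, hgstar]; ring
  have hLy' : f y' + α₂ / 2 * ∑ i ∈ I, (h y' i) ^ 2 ≤ L y' := by
    rw [hL]
    nlinarith [hg0, hα₁.le]
  have hfd : f ystar - f y' ≤ Lf * ‖y' - ystar‖ := by
    have hd := hfLipVal.dist_le_mul ystar y'
    rw [Real.coe_toNNReal _ hLf] at hd
    have h1 : dist (f ystar) (f y') ≤ Lf * dist ystar y' := hd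
    have h2 : f ystar - f y' ≤ dist (f ystar) (f y') := by
      rw [Real.dist_eq]; exact le_abs_self _
    have h3 : dist ystar y' = ‖y' - ystar‖ := by
      rw [dist_eq_norm, ← norm_neg]; congr 1; abel
    linarith [h3 ▸ h1]
  have key : ∑ i ∈ I, (h y' i) ^ 2 ≤ 2 / α₂ * Lf * ‖y' - ystar‖ := by
    have : α₂ / 2 * ∑ i ∈ I, (h y' i) ^ 2 ≤ Lf * ‖y' - ystar‖ := by linarith [hLys ▸ hmin]
    have h4 : ∑ i ∈ I, (h y' i) ^ 2 ≤ 2 / α₂ * (Lf * ‖y' - ystar‖) := by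
      rw [div_mul_eq_mul_div, le_div_iff₀ hα₂]
      nlinarith
    linarith [h4, (by ring : 2 / α₂ * (Lf * ‖y' - ystar‖) = 2 / α₂ * Lf * ‖y' - ystar‖)]
  refine ⟨key, ?_⟩
  have hS : ∑ i ∈ I, (h y' i) ^ 2 ≤ (2 * Lf)^2 / (α₁ * α₂ * μg) := by
    have h5 : 2 / α₂ * Lf * ‖y' - ystar‖ ≤ 2 / α₂ * Lf * (2 * Lf / (α₁ * μg)) := by
      apply mul_le_mul_of_nonneg_left hbound
      positivity
    have h6 : 2 / α₂ * Lf * (2 * Lf / (α₁ * μg)) = (2 * Lf)^2 / (α₁ * α₂ * μg) := by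
      field_simp
    linarith [key, h6 ▸ h5]
  calc Real.sqrt (∑ i ∈ I, (h y' i) ^ 2) ≤ Real.sqrt ((2 * Lf)^2 / (α₁ * α₂ * μg)) :=
        Real.sqrt_le_sqrt hS
    _ = 2 * Lf / Real.sqrt (α₁ * α₂ * μg) := by
        rw [Real.sqrt_div (by positivity : (0:ℝ) ≤ (2*Lf)^2),
          Real.sqrt_sq (by positivity : (0:ℝ) ≤ 2*Lf)]
end
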